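/- For every graph G, vertices u, v, and integer r ≥ 2, the number of r-cliques in G is at most the number of r-cliques in the Kelmans shift G[u→v]. -/

import Mathlib

open SimpleGraph

/-- The Kelmans operation `G[u → v]`: for each vertex `x ∉ {u, v}` adjacent to `u`
but not to `v`, the edge `ux` is deleted and the edge `vx` is added. -/
def kelmans {V : Type*} (G : SimpleGraph V) (u v : V) : SimpleGraph V where
  Adj x y := x ≠ y ∧
    ((G.Adj x y ∧ ¬((x = u ∧ ¬ G.Adj v y ∧ y ≠ v) ∨ (y = u ∧ ¬ G.Adj v x ∧ x ≠ v))) ∨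
     (x = v ∧ G.Adj u y ∧ ¬ G.Adj v y ∧ y ≠ u) ∨
     (y = v ∧ G.Adj u x ∧ ¬ G.Adj v x ∧ x ≠ u))
  symm := by
    constructor
    rintro x y ⟨hne, h⟩
    refine ⟨hne.symm, ?_⟩
    rcases h with ⟨hadj, hnd⟩ | h | h
    · exact Or.inl ⟨hadj.symm, fun hc => hnd hc.symm⟩
    · exact Or.inr (Or.inr h)
    · exact Or.inr (Or.inl h)
  loopless := ⟨fun x h => h.1 rfl⟩

lemma kelmans_adj {V : Type*} (G : SimpleGraph V) (u v x y : V) :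
    (kelmans G u v).Adj x y ↔ x ≠ y ∧
    ((G.Adj x y ∧ ¬((x = u ∧ ¬ G.Adj v y ∧ y ≠ v) ∨ (y = u ∧ ¬ G.Adj v x ∧ x ≠ v))) ∨
     (x = v ∧ G.Adj u y ∧ ¬ G.Adj v y ∧ y ≠ u) ∨
     (y = v ∧ G.Adj u x ∧ ¬ G.Adj v x ∧ x ≠ u)) := Iff.rfl

lemma kelmans_key {V : Type*} (G : SimpleGraph V) (u v : V) {r : ℕ} {S : Finset V}
    (hS : G.IsNClique r S) (hS' : ¬ (kelmans G u v).IsNClique r S) :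
    u ∈ S ∧ v ∉ S ∧ u ≠ v ∧ ∃ w ∈ S, w ≠ u ∧ w ≠ v ∧ ¬ G.Adj v w := by
  have hnc : ¬ (kelmans G u v).IsClique (S : Set V) := fun h => hS' ⟨h, hS.2⟩
  rw [isClique_iff, Set.Pairwise] at hnc
  push_neg at hnc
  obtain ⟨x, hx, y, hy, hxy, hadj'⟩ := hnc
  have hadj : G.Adj x y := hS.1 hx hy hxy
  have hrem : (x = u ∧ ¬G.Adj v y ∧ y ≠ v) ∨ (y = u ∧ ¬G.Adj v x ∧ x ≠ v) := by
    by_contra hc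
    exact hadj' ((kelmans_adj G u v x y).mpr ⟨hxy, Or.inl ⟨hadj, hc⟩⟩)
  have main : ∀ a b : V, a ∈ (S : Set V) → b ∈ (S : Set V) → G.Adj a b →
      (a = u ∧ ¬G.Adj v b ∧ b ≠ v) →
      u ∈ S ∧ v ∉ S ∧ u ≠ v ∧ ∃ w ∈ S, w ≠ u ∧ w ≠ v ∧ ¬ G.Adj v w := by
    rintro a b haS hbS hab ⟨ha, hnvb, hbv⟩
    replace hab : G.Adj u b := ha ▸ hab
    replace haS : u ∈ (S : Set V) := ha ▸ haS
    have hbu : b ≠ u := fun h => (h ▸ hab).ne' rfl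
    have huv : u ≠ v := fun h => hnvb (h ▸ hab)
    have hvS : v ∉ S := fun hv =>
      hnvb (hS.1 (Finset.mem_coe.mpr hv) hbS (Ne.symm hbv))
    exact ⟨Finset.mem_coe.mp haS, hvS, huv, b, Finset.mem_coe.mp hbS, hbu, hbv, hnvb⟩
  rcases hrem with h | h
  · exact main x y hx hy hadj h
  · exact main y x hy hx hadj.symm h

lemma kelmans_image {V : Type*} [DecidableEq V] (G : SimpleGraph V) (u v : V) {r : ℕ}
    (hr : 2 ≤ r) {S : Finset V} (hS : G.IsNClique r S) (hu : u ∈ S) (hv : v ∉ S)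
    (huv : u ≠ v) :
    (kelmans G u v).IsNClique r (insert v (S.erase u)) := by
  have hvadj : ∀ b ∈ S, b ≠ u → (kelmans G u v).Adj v b := by
    intro b hb hbu
    have hbv : b ≠ v := fun h => hv (h ▸ hb)
    refine (kelmans_adj G u v v b).mpr ⟨Ne.symm hbv, ?_⟩
    by_cases hvb : G.Adj v b
    · refine Or.inl ⟨hvb, ?_⟩
      rintro (⟨h, -, -⟩ | ⟨h, -, -⟩)
      · exact huv h.symm
      · exact hbu h
    · exact Or.inr (Or.inl ⟨rfl, hS.1 (Finset.mem_coe.mpr hu) (Finset.mem_coe.mpr hb)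
        (Ne.symm hbu), hvb, hbu⟩)
  constructor
  · intro a ha b hb hab
    simp only [Finset.coe_insert, Set.mem_insert_iff, Finset.mem_coe,
      Finset.mem_erase] at ha hb
    rcases ha with rfl | ⟨hau, haS⟩
    · rcases hb with rfl | ⟨hbu, hbS⟩
      · exact absurd rfl hab
      · exact hvadj b hbS hbu
    · rcases hb with rfl | ⟨hbu, hbS⟩
      · exact (hvadj a haS hau).symm
      · refine (kelmans_adj G u v a b).mpr ⟨hab, Or.inl ⟨hS.1 (Finset.mem_coe.mpr haS)
          (Finset.mem_coe.mpr hbS) hab, ?_⟩⟩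
        rintro (⟨h, -, -⟩ | ⟨h, -, -⟩)
        · exact hau h
        · exact hbu h
  · have hvne : v ∉ S.erase u := fun h => hv (Finset.mem_of_mem_erase h)
    rw [Finset.card_insert_of_notMem hvne, Finset.card_erase_of_mem hu, hS.2]
    omega

/-- The Kelmans shift does not decrease the number of `r`-cliques. -/
theorem kelmans_cliques_le {V : Type*} [Fintype V] (G : SimpleGraph V) (u v : V)
    (r : ℕ) (hr : 2 ≤ r) :
    {s : Finset V | G.IsNClique r s}.ncard ≤
      {s : Finset V | (kelmans G u v).IsNClique r s}.ncard := by
  classical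
  apply Set.ncard_le_ncard_of_injOn
    (fun S => if (kelmans G u v).IsNClique r S then S else insert v (S.erase u))
  · intro S hS
    simp only [Set.mem_setOf_eq] at hS ⊢
    split_ifs with h
    · exact h
    · obtain ⟨hu, hv, huv, -⟩ := kelmans_key G u v hS h
      exact kelmans_image G u v hr hS hu hv huv
  · intro S₁ h₁ S₂ h₂ heq
    simp only [Set.mem_setOf_eq] at h₁ h₂
    dsimp only at heq
    split_ifs at heq with g1 g2 g2
    · exact heq
    · obtain ⟨hu2, hv2, huv, w, hw, hwu, hwv, hnadj⟩ := kelmans_key G u v h₂ g2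
      exfalso
      have hwS1 : w ∈ S₁ := heq ▸ Finset.mem_insert_of_mem (Finset.mem_erase.mpr ⟨hwu, hw⟩)
      have hvS1 : v ∈ S₁ := heq ▸ Finset.mem_insert_self v _
      exact hnadj (h₁.1 (Finset.mem_coe.mpr hvS1) (Finset.mem_coe.mpr hwS1) (Ne.symm hwv))
    · obtain ⟨hu1, hv1, huv, w, hw, hwu, hwv, hnadj⟩ := kelmans_key G u v h₁ g1
      exfalso
      have hwS2 : w ∈ S₂ := heq ▸ Finset.mem_insert_of_mem (Finset.mem_erase.mpr ⟨hwu, hw⟩)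
      have hvS2 : v ∈ S₂ := heq ▸ Finset.mem_insert_self v _
      exact hnadj (h₂.1 (Finset.mem_coe.mpr hvS2) (Finset.mem_coe.mpr hwS2) (Ne.symm hwv))
    · obtain ⟨hu1, hv1, -, -⟩ := kelmans_key G u v h₁ g1
      obtain ⟨hu2, hv2, -, -⟩ := kelmans_key G u v h₂ g2
      have he1 : v ∉ S₁.erase u := fun h => hv1 (Finset.mem_of_mem_erase h)
      have he2 : v ∉ S₂.erase u := fun h => hv2 (Finset.mem_of_mem_erase h)
      have heru : S₁.erase u = S₂.erase u := by
        calc S₁.erase u = (insert v (S₁.erase u)).erase v := (Finset.erase_insert he1).symm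
          _ = (insert v (S₂.erase u)).erase v := by rw [heq]
          _ = S₂.erase u := Finset.erase_insert he2
      rw [← Finset.insert_erase hu1, heru, Finset.insert_erase hu2]
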